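/- Let A and B be n×m complex matrices and 0 < p ≤ 1, and suppose that p·σ_i(B)² ≤ σ_i(A)² for every i, where σ₁ ≥ σ₂ ≥ … denote the singular values in decreasing order. Then there exist an n×n contraction M and an m×m unitary U such that M A Uᵀ = √p B. Explicitly, given SVDs A = X_A Σ_A Y_A and B = X_B Σ_B Y_B, one may take M = √p X_B Σ_B Σ_A‡ X_A† and U = Y_Bᵀ Y_A*. -/
import Mathlib


open Matrix

/-- `M` is a contraction: its operator norm (as an operator on `EuclideanSpace ℂ (Fin n)`,
i.e. the l2 operator norm) is at most 1. -/
def IsContraction {n : ℕ} (M : Matrix (Fin n) (Fin n) ℂ) : Prop :=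
  ‖Matrix.toEuclideanCLM (𝕜 := ℂ) M‖ ≤ 1

/-- The `n × m` "diagonal" matrix with `σ 0, σ 1, …` on the main diagonal. -/
def svdDiag (n m : ℕ) (σ : ℕ → ℝ) : Matrix (Fin n) (Fin m) ℂ :=
  Matrix.of fun i j => if (i : ℕ) = (j : ℕ) then (σ (i : ℕ) : ℂ) else 0

/-- The Moore–Penrose pseudoinverse of `svdDiag n m σ`: diagonal with entries `σᵢ⁻¹`
where `σᵢ ≠ 0` and `0` where `σᵢ = 0` (note `(0 : ℝ)⁻¹ = 0`). -/
noncomputable def svdDiagPinv (n m : ℕ) (σ : ℕ → ℝ) : Matrix (Fin m) (Fin n) ℂ :=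
  Matrix.of fun i j => if (i : ℕ) = (j : ℕ) then ((σ (i : ℕ))⁻¹ : ℂ) else 0

/-- `O = X Σ Y` is a singular value decomposition of `O` : `X`, `Y` unitary and `Σ` the
diagonal matrix of the singular values `σ 0 ≥ σ 1 ≥ … ≥ 0` in decreasing order
(padded with zeros beyond `min n m`). -/
def IsSVD {n m : ℕ} (O : Matrix (Fin n) (Fin m) ℂ) (X : Matrix (Fin n) (Fin n) ℂ)
    (σ : ℕ → ℝ) (Y : Matrix (Fin m) (Fin m) ℂ) : Prop :=
  X ∈ Matrix.unitaryGroup (Fin n) ℂ ∧ Y ∈ Matrix.unitaryGroup (Fin m) ℂ ∧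
  (∀ i, 0 ≤ σ i) ∧ Antitone σ ∧ (∀ i, min n m ≤ i → σ i = 0) ∧
  O = X * svdDiag n m σ * Y

open scoped Matrix.Norms.L2Operator

section auxiliary

lemma sum_fin_ite {m : ℕ} (v : ℕ) (f : Fin m → ℂ) :
    (∑ k : Fin m, if v = (k : ℕ) then f k else 0) = if h : v < m then f ⟨v, h⟩ else 0 := by
  split_ifs with h
  · rw [Finset.sum_eq_single (⟨v, h⟩ : Fin m)]
    · simp
    · intro k _ hk
      rw [if_neg]; intro hv; exact hk (by ext; simp [← hv])
    · simp
  · exact Finset.sum_eq_zero fun k _ => by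
      rw [if_neg]; intro hv; exact h (hv ▸ k.isLt)

lemma svd_mul_pinv {n m : ℕ} (σB σA : ℕ → ℝ) :
    svdDiag n m σB * svdDiagPinv n m σA =
      Matrix.diagonal (fun i : Fin n =>
        if (i : ℕ) < m then ((σB i : ℂ) * ((σA i : ℝ)⁻¹ : ℂ)) else 0) := by
  ext i j
  rw [Matrix.mul_apply]
  simp only [svdDiag, svdDiagPinv, Matrix.of_apply, Matrix.diagonal_apply, ite_mul, zero_mul]
  rw [sum_fin_ite (i : ℕ) (fun k : Fin m => (σB (i : ℕ) : ℂ) *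
      (if (k : ℕ) = (j : ℕ) then ((σA (k : ℕ) : ℝ)⁻¹ : ℂ) else 0))]
  by_cases hij : i = j
  · subst hij
    simp only [if_pos rfl]
    split_ifs with h
    · rfl
    · rfl
  · have hij' : (i : ℕ) ≠ (j : ℕ) := fun h => hij (Fin.ext h)
    rw [if_neg hij]
    split_ifs with h
    · simp [hij']
    · rfl

lemma key_triple {n m : ℕ} (σB σA : ℕ → ℝ)
    (hzero : ∀ i, σA i = 0 → σB i = 0) :
    svdDiag n m σB * svdDiagPinv n m σA * svdDiag n m σA = svdDiag n m σB := by
  rw [svd_mul_pinv]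
  ext i j
  rw [Matrix.diagonal_mul]
  simp only [svdDiag, Matrix.of_apply]
  by_cases hij : (i : ℕ) = (j : ℕ)
  · rw [if_pos hij, if_pos hij, if_pos (hij ▸ j.isLt)]
    by_cases hA : σA (i : ℕ) = 0
    · rw [hzero _ hA]; simp
    · rw [mul_assoc, inv_mul_cancel₀ (by exact_mod_cast hA), mul_one]
  · simp [hij]

lemma l2norm_one_le (n : ℕ) : ‖(1 : Matrix (Fin n) (Fin n) ℂ)‖ ≤ 1 := by
  have h := Matrix.l2_opNorm_conjTranspose_mul_self (1 : Matrix (Fin n) (Fin n) ℂ)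
  simp only [Matrix.conjTranspose_one, mul_one] at h
  nlinarith [norm_nonneg (1 : Matrix (Fin n) (Fin n) ℂ)]

lemma l2norm_unitary {n : ℕ} {X : Matrix (Fin n) (Fin n) ℂ}
    (h : X ∈ Matrix.unitaryGroup (Fin n) ℂ) : ‖X‖ ≤ 1 := by
  have h2 := Matrix.l2_opNorm_conjTranspose_mul_self X
  have h3 : Xᴴ * X = 1 := Matrix.mem_unitaryGroup_iff'.mp h
  rw [h3] at h2
  nlinarith [l2norm_one_le n, norm_nonneg X]

lemma l2norm_diagonal_le {n : ℕ} (d : Fin n → ℂ) (c : ℝ) (hc : 0 ≤ c)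
    (h : ∀ i, ‖d i‖ ≤ c) : ‖Matrix.diagonal d‖ ≤ c := by
  rw [Matrix.l2_opNorm_def]
  refine ContinuousLinearMap.opNorm_le_bound _ hc fun x => ?_
  have hx : ((Matrix.toEuclideanLin.trans LinearMap.toContinuousLinearMap)
      (Matrix.diagonal d)) x = Matrix.toEuclideanLin (Matrix.diagonal d) x := rfl
  rw [hx]
  have h1 : ‖Matrix.toEuclideanLin (Matrix.diagonal d) x‖
      = Real.sqrt (∑ i, ‖d i * x i‖ ^ 2) := by
    rw [EuclideanSpace.norm_eq]
    congr 1
    apply Finset.sum_congr rfl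
    intro i _
    congr 1
    rw [Matrix.toEuclideanLin_apply]
    simp [Matrix.mulVec_diagonal]
  rw [h1]
  have h2 : Real.sqrt (∑ i, ‖d i * x i‖ ^ 2) ≤ Real.sqrt (∑ i, c ^ 2 * ‖x i‖ ^ 2) := by
    apply Real.sqrt_le_sqrt
    apply Finset.sum_le_sum
    intro i _
    rw [norm_mul, mul_pow]
    apply mul_le_mul_of_nonneg_right _ (by positivity)
    exact pow_le_pow_left₀ (norm_nonneg _) (h i) 2
  refine h2.trans ?_
  rw [← Finset.mul_sum, Real.sqrt_mul (by positivity), Real.sqrt_sq hc]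
  gcongr
  rw [EuclideanSpace.norm_eq]

lemma transpose_mem_unitary {k : ℕ} {Y : Matrix (Fin k) (Fin k) ℂ}
    (h : Y ∈ Matrix.unitaryGroup (Fin k) ℂ) : Yᵀ ∈ Matrix.unitaryGroup (Fin k) ℂ := by
  rw [Matrix.mem_unitaryGroup_iff, Matrix.star_eq_conjTranspose]
  have h' : Yᴴ * Y = 1 := Matrix.mem_unitaryGroup_iff'.mp h
  have ht : Yᵀᴴ = Yᴴᵀ := by ext i j; simp
  rw [ht, ← Matrix.transpose_mul, h', Matrix.transpose_one]

end auxiliary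

/-- **Sufficient condition for a pure LOCC transformation.** If `p σᵢ(B)² ≤ σᵢ(A)²` for all `i`,
then there are a contraction `M` and a unitary `U` with `M A Uᵀ = √p B`. Explicitly, given SVDs
`A = X_A Σ_A Y_A`, `B = X_B Σ_B Y_B`, one may take `M = √p X_B Σ_B Σ_A‡ X_A†` and
`U = Y_Bᵀ Y_A*`. -/
theorem pure_locc_of_singular_values {n m : ℕ} (A B : Matrix (Fin n) (Fin m) ℂ)
    (p : ℝ) (hp0 : 0 < p) (hp1 : p ≤ 1)
    (XA : Matrix (Fin n) (Fin n) ℂ) (σA : ℕ → ℝ) (YA : Matrix (Fin m) (Fin m) ℂ)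
    (hA : IsSVD A XA σA YA)
    (XB : Matrix (Fin n) (Fin n) ℂ) (σB : ℕ → ℝ) (YB : Matrix (Fin m) (Fin m) ℂ)
    (hB : IsSVD B XB σB YB)
    (hσ : ∀ i, p * σB i ^ 2 ≤ σA i ^ 2) :
    (∃ (M : Matrix (Fin n) (Fin n) ℂ) (U : Matrix (Fin m) (Fin m) ℂ),
      IsContraction M ∧ U ∈ Matrix.unitaryGroup (Fin m) ℂ ∧
      M * A * Uᵀ = Real.sqrt p • B) ∧
    (∀ (M : Matrix (Fin n) (Fin n) ℂ) (U : Matrix (Fin m) (Fin m) ℂ),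
      M = Real.sqrt p • (XB * svdDiag n m σB * svdDiagPinv n m σA * XAᴴ) →
      U = YBᵀ * YA.map (starRingEnd ℂ) →
      IsContraction M ∧ U ∈ Matrix.unitaryGroup (Fin m) ℂ ∧
      M * A * Uᵀ = Real.sqrt p • B) := by
  obtain ⟨hXAU, hYAU, hσA0, -, -, hAeq⟩ := hA
  obtain ⟨hXBU, hYBU, hσB0, -, -, hBeq⟩ := hB
  have hzero : ∀ i, σA i = 0 → σB i = 0 := by
    intro i hAi
    have h1 := hσ i
    rw [hAi] at h1
    have h2 : σB i ^ 2 = 0 := le_antisymm (by nlinarith) (sq_nonneg _)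
    exact pow_eq_zero_iff (by norm_num) |>.mp h2
  set M₀ : Matrix (Fin n) (Fin n) ℂ :=
    Real.sqrt p • (XB * svdDiag n m σB * svdDiagPinv n m σA * XAᴴ) with hM₀
  set U₀ : Matrix (Fin m) (Fin m) ℂ := YBᵀ * YA.map (starRingEnd ℂ) with hU₀
  -- the diagonal middle factor
  set d : Fin n → ℂ :=
    fun i => if (i : ℕ) < m then ((σB i : ℂ) * ((σA i : ℝ)⁻¹ : ℂ)) else 0 with hd
  have hM₀' : M₀ = XB * Matrix.diagonal (fun i => (Real.sqrt p : ℂ) * d i) * XAᴴ := by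
    have h1 : XB * svdDiag n m σB * svdDiagPinv n m σA = XB * Matrix.diagonal d := by
      rw [Matrix.mul_assoc, svd_mul_pinv]
    have h2 : Matrix.diagonal (fun i => (Real.sqrt p : ℂ) * d i)
        = Real.sqrt p • Matrix.diagonal d := by
      ext i j
      by_cases hij : i = j
      · subst hij; simp [Matrix.diagonal_apply_eq, Complex.real_smul]
      · simp [Matrix.diagonal_apply_ne _ hij, hij]
    rw [hM₀, h1, h2, Matrix.mul_smul, Matrix.smul_mul]
  -- contraction
  have hcontr : IsContraction M₀ := by
    have hnorm : ‖M₀‖ ≤ 1 := by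
      have hdiag : ‖Matrix.diagonal (fun i => (Real.sqrt p : ℂ) * d i)‖ ≤ 1 := by
        apply l2norm_diagonal_le _ _ zero_le_one
        intro i
        rw [norm_mul]
        by_cases him : (i : ℕ) < m
        · have hdi : d i = (σB i : ℂ) * ((σA i : ℝ)⁻¹ : ℂ) := by rw [hd]; simp [him]
          rw [hdi]
          have h1 : ‖(Real.sqrt p : ℂ)‖ = Real.sqrt p := by
            rw [Complex.norm_real, Real.norm_eq_abs, abs_of_nonneg (Real.sqrt_nonneg p)]
          have h2 : ‖(σB (i : ℕ) : ℂ) * ((σA (i : ℕ) : ℝ)⁻¹ : ℂ)‖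
              = σB (i : ℕ) * (σA (i : ℕ))⁻¹ := by
            rw [norm_mul, norm_inv, Complex.norm_real, Complex.norm_real, Real.norm_eq_abs,
              Real.norm_eq_abs, abs_of_nonneg (hσB0 _), abs_of_nonneg (hσA0 _)]
          rw [h1, h2]
          rcases eq_or_lt_of_le (hσA0 (i : ℕ)) with h | h
          · rw [← h]; simp
          · have hb : Real.sqrt p * σB (i : ℕ) ≤ σA (i : ℕ) := by
              have h1 := Real.sqrt_le_sqrt (hσ (i : ℕ))
              rwa [Real.sqrt_mul hp0.le, Real.sqrt_sq (hσB0 _), Real.sqrt_sq (hσA0 _)] at h1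
            rw [← mul_assoc, ← div_eq_mul_inv, div_le_one h]
            exact hb
        · have hdi : d i = 0 := by rw [hd]; simp [him]
          rw [hdi, norm_zero, mul_zero]
          exact zero_le_one
      calc ‖M₀‖ = ‖XB * Matrix.diagonal (fun i => (Real.sqrt p : ℂ) * d i) * XAᴴ‖ := by
            rw [hM₀']
        _ ≤ ‖XB * Matrix.diagonal (fun i => (Real.sqrt p : ℂ) * d i)‖ * ‖XAᴴ‖ :=
            Matrix.l2_opNorm_mul _ _
        _ ≤ (‖XB‖ * ‖Matrix.diagonal (fun i => (Real.sqrt p : ℂ) * d i)‖) * ‖XAᴴ‖ :=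
            mul_le_mul_of_nonneg_right (Matrix.l2_opNorm_mul _ _) (norm_nonneg _)
        _ ≤ (1 * 1) * 1 := by
            have hXA1 : ‖XAᴴ‖ ≤ 1 := by
              rw [Matrix.l2_opNorm_conjTranspose]; exact l2norm_unitary hXAU
            have hXB1 : ‖XB‖ ≤ 1 := l2norm_unitary hXBU
            gcongr <;> positivity
        _ = 1 := by norm_num
    rw [IsContraction, ← Matrix.cstar_norm_def]
    exact hnorm
  -- unitarity of U₀
  have hmap : YA.map (starRingEnd ℂ) = (YAᴴ)ᵀ := by
    ext i j
    simp [Matrix.conjTranspose_apply]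
  have hU₀mem : U₀ ∈ Matrix.unitaryGroup (Fin m) ℂ := by
    apply mul_mem (transpose_mem_unitary hYBU)
    rw [hmap]
    exact transpose_mem_unitary (Unitary.star_mem hYAU)
  -- product identity
  have hprod : M₀ * A * U₀ᵀ = Real.sqrt p • B := by
    have hUt : U₀ᵀ = YAᴴ * YB := by
      rw [hU₀, Matrix.transpose_mul, Matrix.transpose_transpose, hmap,
        Matrix.transpose_transpose]
    have hXA' : XAᴴ * XA = 1 := Matrix.mem_unitaryGroup_iff'.mp hXAU
    have hYA' : YA * YAᴴ = 1 := Matrix.mem_unitaryGroup_iff.mp hYAU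
    rw [hUt, hAeq, hM₀, Matrix.smul_mul, Matrix.smul_mul, hBeq]
    congr 1
    simp only [Matrix.mul_assoc]
    rw [← Matrix.mul_assoc XAᴴ XA, hXA', Matrix.one_mul,
      ← Matrix.mul_assoc YA YAᴴ, hYA', Matrix.one_mul,
      ← Matrix.mul_assoc (svdDiagPinv n m σA), ← Matrix.mul_assoc (svdDiag n m σB),
      ← Matrix.mul_assoc (svdDiag n m σB), key_triple σB σA hzero]
  refine ⟨⟨M₀, U₀, hcontr, hU₀mem, hprod⟩, ?_⟩
  intro M U hM hU
  subst hM
  subst hU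
  exact ⟨hcontr, hU₀mem, hprod⟩
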